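/- arXiv:1905.04731 — 2 statements merged into one kernel-verified Lean document; each statement's English description precedes it below -/
import Mathlib

section
/- Let (R, m, k) be a commutative Noetherian local ring with m² = 0 and e = dim_k(m) ≥ 1. Let M = R^{⊕α} ⊕ k^{⊕β} for some integers α, β ≥ 0. Then there exist a short exact sequence 0 → S → F → M → 0 with F finitely generated free (so S is a first syzygy of M) and a short exact sequence of R-modules 0 → M^{⊕e²} → R^{⊕(e²α + eβ)} → S → 0. In particular, M has finite reducing projective dimension (with a reducing sequence of length 1 ending in a free module). -/
open CategoryTheory

universe u

variable (R : Type u) [CommRing R]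

/-- `SES R A B C` : there is a short exact sequence `0 → A → B → C → 0` of `R`-modules. -/
def SES (A B C : ModuleCat.{u} R) : Prop :=
  ∃ (f : A →ₗ[R] B) (g : B →ₗ[R] C),
    Function.Injective f ∧ Function.Surjective g ∧ LinearMap.range f = LinearMap.ker g

/-- A finitely generated free module. -/
def IsFinFree (F : ModuleCat.{u} R) : Prop :=
  Module.Finite R F ∧ Module.Free R F

/-- `IsSyzygy R n S K` : `S` is an `n`-th syzygy of `K`, i.e. there is an exact sequence
`0 → S → F_{n-1} → ⋯ → F_0 → K → 0` with each `F_j` finitely generated free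
(for `n = 0` this just means `S ≅ K`). -/
def IsSyzygy : ℕ → ModuleCat.{u} R → ModuleCat.{u} R → Prop
  | 0, S, K => Nonempty (S ≃ₗ[R] K)
  | n + 1, S, K => ∃ T F : ModuleCat.{u} R, IsSyzygy n T K ∧ IsFinFree R F ∧ SES R S F T

/-- The direct sum `M^{⊕ a}`. -/
def MPow (M : ModuleCat.{u} R) (a : ℕ) : ModuleCat.{u} R := ModuleCat.of R (Fin a → M)

/-- `IsReducingSeq R K` : the finitely generated modules `K 0, …, K r` form a reducing
sequence, i.e. there are positive integers `a i, b i, n i` and short exact sequences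
`0 → (K i)^{⊕ a i} → K (i+1) → S i → 0` where `S i` is an `(n i)`-th syzygy
of `(K i)^{⊕ b i}`. -/
def IsReducingSeq {r : ℕ} (K : Fin (r + 1) → ModuleCat.{u} R) : Prop :=
  (∀ i, Module.Finite R (K i)) ∧
  ∃ a b n : Fin r → ℕ,
    (∀ i, 0 < a i) ∧ (∀ i, 0 < b i) ∧ (∀ i, 0 < n i) ∧
    ∀ i : Fin r, ∃ S : ModuleCat.{u} R,
      IsSyzygy R (n i) S (MPow R (K i.castSucc) (b i)) ∧
      SES R (MPow R (K i.castSucc) (a i)) (K i.succ) S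

/-- `ExtVanishes R M N i` : the `R`-module `Ext^i_R(M, N)` is zero. -/
def ExtVanishes (M N : ModuleCat.{u} R) (i : ℕ) : Prop :=
  Subsingleton (((Ext R (ModuleCat.{u} R) i).obj (Opposite.op M)).obj N)

/-- A totally reflexive module. -/
def IsTotallyReflexive (M : ModuleCat.{u} R) : Prop :=
  Function.Bijective (Module.Dual.eval R M) ∧
  ∀ i : ℕ, 1 ≤ i →
    ExtVanishes R M (ModuleCat.of R R) i ∧
    ExtVanishes R (ModuleCat.of R (Module.Dual R M)) (ModuleCat.of R R) i

/-- `ResolvedBy R P m M` : there is an exact sequence `0 → G_m → ⋯ → G_0 → M → 0`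
in which each `G_j` satisfies `P`. -/
def ResolvedBy (P : ModuleCat.{u} R → Prop) : ℕ → ModuleCat.{u} R → Prop
  | 0, M => ∃ G : ModuleCat.{u} R, P G ∧ Nonempty (G ≃ₗ[R] M)
  | m + 1, M => ∃ G S : ModuleCat.{u} R, P G ∧ SES R S G M ∧ ResolvedBy P m S

/-- Finite Gorenstein dimension. -/
def FiniteGdim (M : ModuleCat.{u} R) : Prop :=
  ∃ m : ℕ, ResolvedBy R (IsTotallyReflexive R) m M

/-- Finite projective dimension. -/
def FinitePd (M : ModuleCat.{u} R) : Prop :=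
  ∃ m : ℕ, ResolvedBy R (fun G => Module.Projective R G) m M

/-- `HasRedSeqTo R P M` : `M` admits a reducing sequence `K_0 = M, K_1, …, K_r`
whose last module `K_r` satisfies `P`. -/
def HasRedSeqTo (P : ModuleCat.{u} R → Prop) (M : ModuleCat.{u} R) : Prop :=
  ∃ (r : ℕ) (K : Fin (r + 1) → ModuleCat.{u} R),
    K 0 = M ∧ IsReducingSeq R K ∧ P (K (Fin.last r))

/-- Finite reducing Gorenstein dimension. -/
def FiniteRedGdim (M : ModuleCat.{u} R) : Prop :=
  HasRedSeqTo R (FiniteGdim R) M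

/-- Finite reducing projective dimension. -/
def FiniteRedPd (M : ModuleCat.{u} R) : Prop :=
  HasRedSeqTo R (FinitePd R) M


section Aux

open IsLocalRing

/-- transport of SES-data along linear equivalences -/
theorem ses_congr {R : Type u} [CommRing R] {A B C A' B' C' : Type*}
    [AddCommGroup A] [Module R A] [AddCommGroup B] [Module R B] [AddCommGroup C] [Module R C]
    [AddCommGroup A'] [Module R A'] [AddCommGroup B'] [Module R B'] [AddCommGroup C'] [Module R C']
    (eA : A ≃ₗ[R] A') (eB : B ≃ₗ[R] B') (eC : C ≃ₗ[R] C')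
    (f : A →ₗ[R] B) (g : B →ₗ[R] C)
    (hf : Function.Injective f) (hg : Function.Surjective g)
    (hfg : LinearMap.range f = LinearMap.ker g) :
    ∃ (f' : A' →ₗ[R] B') (g' : B' →ₗ[R] C'),
      Function.Injective f' ∧ Function.Surjective g' ∧
      LinearMap.range f' = LinearMap.ker g' := by
  refine ⟨(eB : B →ₗ[R] B') ∘ₗ f ∘ₗ (eA.symm : A' →ₗ[R] A),
    (eC : C →ₗ[R] C') ∘ₗ g ∘ₗ (eB.symm : B' →ₗ[R] B), ?_, ?_, ?_⟩
  · exact eB.injective.comp (hf.comp eA.symm.injective)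
  · exact eC.surjective.comp (hg.comp eB.symm.surjective)
  · ext x
    simp only [LinearMap.mem_range, LinearMap.mem_ker, LinearMap.coe_comp, Function.comp_apply,
      LinearEquiv.coe_coe, EmbeddingLike.map_eq_zero_iff]
    constructor
    · rintro ⟨y, rfl⟩
      simp only [LinearEquiv.symm_apply_apply]
      have : f (eA.symm y) ∈ LinearMap.ker g := hfg ▸ LinearMap.mem_range_self _ _
      exact this
    · intro hx
      have : eB.symm x ∈ LinearMap.range f := hfg ▸ hx
      obtain ⟨y, hy⟩ := this
      exact ⟨eA y, by simp [hy]⟩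

variable {R : Type u} [CommRing R] [IsLocalRing R]

/-- key SES model 1 : `0 → (ι → m) → X × (ι → R) → X × (ι → k) → 0` -/
theorem ses_model1 (X : Type*) [AddCommGroup X] [Module R X] (ι : Type*) :
    ∃ (f : (ι → maximalIdeal R) →ₗ[R] (X × (ι → R)))
      (g : (X × (ι → R)) →ₗ[R] (X × (ι → ResidueField R))),
      Function.Injective f ∧ Function.Surjective g ∧
      LinearMap.range f = LinearMap.ker g := by
  refine ⟨LinearMap.prod 0 (LinearMap.pi fun i => (maximalIdeal R).subtype ∘ₗ LinearMap.proj i),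
    LinearMap.prodMap LinearMap.id
      (LinearMap.pi fun i =>
        (IsScalarTower.toAlgHom R R (ResidueField R)).toLinearMap ∘ₗ LinearMap.proj i),
    ?_, ?_, ?_⟩
  · intro x y h
    funext i
    have := congrFun (congrArg Prod.snd h) i
    exact Subtype.ext this
  · rintro ⟨x, b⟩
    choose c hc using fun i => Ideal.Quotient.mk_surjective (I := maximalIdeal R) (b i)
    refine ⟨(x, c), ?_⟩
    ext i
    · rfl
    · simp [Ideal.Quotient.algebraMap_eq]
      exact hc i
  · ext ⟨x, b⟩
    simp only [LinearMap.mem_range, LinearMap.mem_ker]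
    constructor
    · rintro ⟨y, hy⟩
      rw [← hy]
      ext i
      · simp
      · simpa [Ideal.Quotient.algebraMap_eq] using
          Ideal.Quotient.eq_zero_iff_mem.mpr (SetLike.coe_mem (y i))
    · intro h
      have h1 : x = 0 := congrArg Prod.fst h
      have h2 : ∀ i, b i ∈ maximalIdeal R := fun i =>
        by simpa [Ideal.Quotient.algebraMap_eq, Ideal.Quotient.eq_zero_iff_mem] using
          congrFun (congrArg Prod.snd h) i
      exact ⟨fun i => ⟨b i, h2 i⟩, by ext <;> simp [h1]⟩

/-- key SES model 2 : `0 → X × (ι → m) → X × (ι → R) → (ι → k) → 0` -/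
theorem ses_model2 (X : Type*) [AddCommGroup X] [Module R X] (ι : Type*) :
    ∃ (f : (X × (ι → maximalIdeal R)) →ₗ[R] (X × (ι → R)))
      (g : (X × (ι → R)) →ₗ[R] (ι → ResidueField R)),
      Function.Injective f ∧ Function.Surjective g ∧
      LinearMap.range f = LinearMap.ker g := by
  refine ⟨LinearMap.prodMap LinearMap.id
      (LinearMap.pi fun i => (maximalIdeal R).subtype ∘ₗ LinearMap.proj i),
    (LinearMap.pi fun i =>
      (IsScalarTower.toAlgHom R R (ResidueField R)).toLinearMap ∘ₗ LinearMap.proj i) ∘ₗ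
      LinearMap.snd R X (ι → R),
    ?_, ?_, ?_⟩
  · rintro ⟨x, b⟩ ⟨y, c⟩ h
    have h1 := congrArg Prod.fst h
    have h2 := congrArg Prod.snd h
    simp only [LinearMap.prodMap_apply, LinearMap.id_coe, id_eq] at h1 h2
    exact Prod.ext h1 (funext fun i => Subtype.ext (congrFun h2 i))
  · intro b
    choose c hc using fun i => Ideal.Quotient.mk_surjective (I := maximalIdeal R) (b i)
    refine ⟨(0, c), ?_⟩
    ext i
    simp [Ideal.Quotient.algebraMap_eq]
    exact hc i
  · ext ⟨x, b⟩
    simp only [LinearMap.mem_range, LinearMap.mem_ker]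
    constructor
    · rintro ⟨⟨y, c⟩, h⟩
      rw [← h]
      ext i
      simpa [Ideal.Quotient.algebraMap_eq] using
        Ideal.Quotient.eq_zero_iff_mem.mpr (SetLike.coe_mem (c i))
    · intro h
      have h2 : ∀ i, b i ∈ maximalIdeal R := fun i =>
        by simpa [Ideal.Quotient.algebraMap_eq, Ideal.Quotient.eq_zero_iff_mem] using
          congrFun h i
      exact ⟨(x, fun i => ⟨b i, h2 i⟩), by ext <;> simp⟩

/-- the maximal ideal is isomorphic to `k^e` when `m² = 0` -/
noncomputable def mEquiv [IsNoetherianRing R] (hm2 : (maximalIdeal R) ^ 2 = ⊥)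
    (e : ℕ) (he : e = Module.finrank (ResidueField R) (CotangentSpace R)) :
    (maximalIdeal R) ≃ₗ[R] (Fin e → ResidueField R) := by
  have hinj : Function.Injective (maximalIdeal R).toCotangent := by
    intro x y h
    have : x - y ∈ LinearMap.ker (maximalIdeal R).toCotangent := by
      simp [LinearMap.mem_ker, map_sub, h]
    rw [Ideal.mem_toCotangent_ker, hm2] at this
    have h0 : x - y = 0 := Subtype.ext (by simpa using (Ideal.mem_bot).mp this)
    exact sub_eq_zero.mp h0
  have e1 : (maximalIdeal R) ≃ₗ[R] CotangentSpace R :=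
    LinearEquiv.ofBijective (maximalIdeal R).toCotangent
      ⟨hinj, Ideal.toCotangent_surjective _⟩
  have b := Module.finBasisOfFinrankEq (ResidueField R) (CotangentSpace R) he.symm
  have e2 : CotangentSpace R ≃ₗ[ResidueField R] (Fin e → ResidueField R) := b.equivFun
  exact e1.trans (e2.restrictScalars R)

/-- a linear version of `Equiv.arrowProdEquivProdArrow` -/
def arrowProdLequiv (A B γ : Type*) [AddCommGroup A] [Module R A]
    [AddCommGroup B] [Module R B] :
    (γ → A × B) ≃ₗ[R] (γ → A) × (γ → B) :=
  { Equiv.arrowProdEquivProdArrow γ (fun _ => A) (fun _ => B) with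
    map_add' := fun _ _ => rfl
    map_smul' := fun _ _ => rfl }

/-- flatten `(Fin n → Fin p → A)` into `Fin (n*p) → A` -/
def flattenLequiv (A : Type*) [AddCommGroup A] [Module R A] (n p : ℕ) :
    (Fin n → Fin p → A) ≃ₗ[R] (Fin (n * p) → A) :=
  (LinearEquiv.curry R A (Fin n) (Fin p)).symm.trans
    (LinearEquiv.funCongrLeft R A finProdFinEquiv.symm)

end Aux

theorem redPd_of_free_plus_residue
    (R : Type u) [CommRing R] [IsNoetherianRing R] [IsLocalRing R]
    (hm2 : (IsLocalRing.maximalIdeal R) ^ 2 = ⊥)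
    (e : ℕ)
    (he : e = Module.finrank (IsLocalRing.ResidueField R) (IsLocalRing.CotangentSpace R))
    (he1 : 1 ≤ e) (α β : ℕ) :
    (∃ S F : ModuleCat.{u} R, IsFinFree R F ∧
      SES R S F (ModuleCat.of R ((Fin α → R) × (Fin β → IsLocalRing.ResidueField R))) ∧
      SES R (MPow R (ModuleCat.of R ((Fin α → R) × (Fin β → IsLocalRing.ResidueField R))) (e ^ 2))
        (ModuleCat.of R (Fin (e ^ 2 * α + e * β) → R)) S) ∧
    FiniteRedPd R (ModuleCat.of R ((Fin α → R) × (Fin β → IsLocalRing.ResidueField R))) := by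
  classical
  set k := IsLocalRing.ResidueField R
  set mm := ↥(IsLocalRing.maximalIdeal R)
  set M0 : Type u := (Fin α → R) × (Fin β → k) with hM0
  set M : ModuleCat.{u} R := ModuleCat.of R M0 with hM
  let em : mm ≃ₗ[R] (Fin e → k) := mEquiv hm2 e he
  -- the syzygy module S and the free cover F
  set S : ModuleCat.{u} R := ModuleCat.of R (Fin β → mm) with hS
  set F : ModuleCat.{u} R := ModuleCat.of R ((Fin α → R) × (Fin β → R)) with hF
  have hFfree : IsFinFree R F := ⟨inferInstanceAs (Module.Finite R ((Fin α → R) × (Fin β → R))),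
    inferInstanceAs (Module.Free R ((Fin α → R) × (Fin β → R)))⟩
  -- first SES : 0 → S → F → M → 0
  have hses1 : SES R S F M := by
    obtain ⟨f, g, hf, hg, hfg⟩ := ses_model1 (R := R) (Fin α → R) (Fin β)
    exact ⟨f, g, hf, hg, hfg⟩
  -- second SES : 0 → M^{e²} → R^{e²α+eβ} → S → 0
  have hses2 : SES R (MPow R M (e ^ 2)) (ModuleCat.of R (Fin (e ^ 2 * α + e * β) → R)) S := by
    obtain ⟨f, g, hf, hg, hfg⟩ :=
      ses_model2 (R := R) (Fin (e ^ 2 * α) → R) (Fin (e * β))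
    -- equivalences
    let q1 : (Fin (e ^ 2) → M0) ≃ₗ[R]
        ((Fin (e ^ 2) → Fin α → R) × (Fin (e ^ 2) → Fin β → k)) :=
      arrowProdLequiv (Fin α → R) (Fin β → k) (Fin (e ^ 2))
    let q3 : (Fin (e ^ 2 * β) → k) ≃ₗ[R] (Fin (e * β) × Fin e → k) :=
      LinearEquiv.funCongrLeft R k
        ((finProdFinEquiv (m := e * β) (n := e)).trans (finCongr (by ring)))
    let q4 : (Fin (e * β) × Fin e → k) ≃ₗ[R] (Fin (e * β) → Fin e → k) :=
      LinearEquiv.curry R k (Fin (e * β)) (Fin e)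
    let q5 : (Fin (e * β) → Fin e → k) ≃ₗ[R] (Fin (e * β) → mm) :=
      LinearEquiv.piCongrRight fun _ => em.symm
    let q2 : ((Fin (e ^ 2) → Fin α → R) × (Fin (e ^ 2) → Fin β → k)) ≃ₗ[R]
        ((Fin (e ^ 2 * α) → R) × (Fin (e * β) → mm)) :=
      LinearEquiv.prodCongr (flattenLequiv R (e ^ 2) α)
        ((flattenLequiv k (e ^ 2) β).trans (q3.trans (q4.trans q5)))
    let eA : ((Fin (e ^ 2 * α) → R) × (Fin (e * β) → mm)) ≃ₗ[R] (Fin (e ^ 2) → M0) :=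
      (q1.trans q2).symm
    let eB : ((Fin (e ^ 2 * α) → R) × (Fin (e * β) → R)) ≃ₗ[R]
        (Fin (e ^ 2 * α + e * β) → R) :=
      ((LinearEquiv.funCongrLeft R R (finSumFinEquiv (m := e ^ 2 * α) (n := e * β))).trans
        (LinearEquiv.sumArrowLequivProdArrow _ _ R R)).symm
    let r1 : (Fin (e * β) → k) ≃ₗ[R] (Fin β × Fin e → k) :=
      LinearEquiv.funCongrLeft R k
        ((finProdFinEquiv (m := β) (n := e)).trans (finCongr (by ring)))
    let r2 : (Fin β × Fin e → k) ≃ₗ[R] (Fin β → Fin e → k) :=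
      LinearEquiv.curry R k (Fin β) (Fin e)
    let r3 : (Fin β → Fin e → k) ≃ₗ[R] (Fin β → mm) :=
      LinearEquiv.piCongrRight fun _ => em.symm
    let eC : (Fin (e * β) → k) ≃ₗ[R] (Fin β → mm) := r1.trans (r2.trans r3)
    obtain ⟨f', g', h1, h2, h3⟩ := ses_congr eA eB eC f g hf hg hfg
    exact ⟨f', g', h1, h2, h3⟩
  refine ⟨⟨S, F, hFfree, hses1, hses2⟩, ?_⟩
  -- the reducing sequence
  refine ⟨1, ![M, ModuleCat.of R (Fin (e ^ 2 * α + e * β) → R)], rfl, ?_, ?_⟩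
  · constructor
    · intro i
      have hk : Module.Finite R k :=
        Module.Finite.of_surjective ((IsLocalRing.maximalIdeal R).mkQ)
          (Submodule.mkQ_surjective _)
      fin_cases i
      · exact inferInstanceAs (Module.Finite R M0)
      · exact inferInstanceAs (Module.Finite R (Fin (e ^ 2 * α + e * β) → R))
    · refine ⟨fun _ => e ^ 2, fun _ => 1, fun _ => 1, fun _ => by positivity,
        fun _ => one_pos, fun _ => one_pos, ?_⟩
      intro i
      have hi : i = 0 := Subsingleton.elim _ _
      subst hi
      refine ⟨S, ?_, ?_⟩
      · -- S is a first syzygy of M^{⊕1}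
        refine ⟨MPow R M 1, F, ⟨LinearEquiv.refl R _⟩, hFfree, ?_⟩
        obtain ⟨f, g, hf, hg, hfg⟩ := hses1
        obtain ⟨f', g', h1, h2, h3⟩ := ses_congr (LinearEquiv.refl R ↥S)
          (LinearEquiv.refl R ↥F) (LinearEquiv.funUnique (Fin 1) R ↥M).symm f g hf hg hfg
        exact ⟨f', g', h1, h2, h3⟩
      · exact hses2
  · refine ⟨0, ModuleCat.of R (Fin (e ^ 2 * α + e * β) → R), ?_, ⟨LinearEquiv.refl R _⟩⟩
    exact inferInstanceAs (Module.Projective R (Fin (e ^ 2 * α + e * β) → R))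
end

section
/- Let R be a commutative Noetherian local ring and X a finitely generated torsionless R-module, i.e., the natural evaluation map X → Hom_R(Hom_R(X,R),R) is injective. Then there exist a finitely generated free R-module F, a finitely generated R-module X₁, and a short exact sequence 0 → X → F → X₁ → 0 such that Ext^1_R(X₁, R) = 0. -/
open CategoryTheory

universe u

variable (R : Type u) [CommRing R]

/-! ### Auxiliary machinery -/

noncomputable section PushAux

open CategoryTheory Limits

namespace PushAux

variable {R : Type u} [CommRing R]

lemma subsingleton_of_isZero {M : ModuleCat.{u} R} (hM : Limits.IsZero M) :
    Subsingleton M := by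
  refine ⟨fun a b => ?_⟩
  have h0 : (𝟙 M : M ⟶ M) = 0 := hM.eq_of_src _ _
  have ha : a = (𝟙 M : M ⟶ M) a := rfl
  have hb : b = (𝟙 M : M ⟶ M) b := rfl
  rw [ha, hb, h0]
  rfl

variable (F G H W : ModuleCat.{u} R)
  (q : G ⟶ F) (h : H ⟶ G) (g : F ⟶ W)
  (hhq : h ≫ q = 0)

/-- The chain complex `⋯ → H → G → F` extended by syzygies. -/
def cx : ChainComplex (ModuleCat.{u} R) ℕ :=
  ChainComplex.mk F G H q h hhq
    (fun S => ⟨Projective.syzygies S.f, Projective.d S.f, (Category.assoc _ _ _).trans ((congrArg _ (kernel.condition S.f)).trans comp_zero)⟩)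

@[simp] lemma cx_d_1_0 : (cx F G H q h hhq).d 1 0 = q := by
  simp [cx]

@[simp] lemma cx_d_2_1 : (cx F G H q h hhq).d 2 1 = h := by
  simp [cx]

instance cxProj [Projective F] [Projective G] [Projective H] (n : ℕ) :
    Projective ((cx F G H q h hhq).X n) := by
  obtain (_ | _ | _ | n) := n
  · exact ‹Projective F›
  · exact ‹Projective G›
  · exact ‹Projective H›
  · apply Projective.projective_over

lemma cx_exactAt_succ_succ (n : ℕ) : (cx F G H q h hhq).ExactAt (n + 1 + 1) := by
  rw [HomologicalComplex.exactAt_iff' _ (n + 1 + 1 + 1) (n + 1 + 1) (n + 1) (by simp) (by simp)]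
  dsimp [cx, HomologicalComplex.sc', HomologicalComplex.shortComplexFunctor',
    ChainComplex.mk, ChainComplex.mkAux]
  try simp only [ChainComplex.of_d]
  try dsimp [ChainComplex.mkAux]
  convert CategoryTheory.exact_d_f (C := ModuleCat.{u} R) (ChainComplex.mkAux F G H q h hhq (fun S => ⟨Projective.syzygies S.f, Projective.d S.f, (Category.assoc _ _ _).trans ((congrArg _ (kernel.condition S.f)).trans comp_zero)⟩) n).f using 1
  congr 1 <;> exact ChainComplex.of_d _ _ _

lemma cx_exactAt_one (hker1 : ∀ y : G, q y = 0 → ∃ z : H, h z = y) :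
    (cx F G H q h hhq).ExactAt 1 := by
  rw [HomologicalComplex.exactAt_iff' _ 2 1 0 (by simp) (by simp)]
  rw [ShortComplex.moduleCat_exact_iff]
  intro y hy
  obtain ⟨z, hz⟩ := hker1 y hy
  exact ⟨z, hz⟩

variable (hqg : q ≫ g = 0) (hsurj : Function.Surjective g)
  (hker0 : ∀ x : F, g x = 0 → ∃ y : G, q y = x)
  (hker1 : ∀ y : G, q y = 0 → ∃ z : H, h z = y)

include hhq hqg hsurj hker0 hker1 in
/-- The projective resolution of `W` built from `cx`. -/
def res [Projective F] [Projective G] [Projective H] : ProjectiveResolution W where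
  complex := cx F G H q h hhq
  π := (ChainComplex.toSingle₀Equiv _ _).symm ⟨g, by
    rw [cx_d_1_0]; exact hqg⟩
  quasiIso := ⟨fun n => by
    cases n with
    | zero =>
      rw [ChainComplex.quasiIsoAt₀_iff, ShortComplex.quasiIso_iff_of_zeros']
      · refine (ShortComplex.exact_and_epi_g_iff_of_iso ?_).2
          ⟨(ShortComplex.moduleCat_exact_iff (ShortComplex.mk q g hqg)).2 hker0,
            (ModuleCat.epi_iff_surjective g).2 hsurj⟩
        refine ShortComplex.isoMk (Iso.refl _) (Iso.refl _) (Iso.refl _) ?_ ?_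
        · exact (Category.id_comp _).trans (Category.comp_id _).symm
        · exact (Category.id_comp _).trans (Category.comp_id _).symm
      all_goals rfl
    | succ n =>
      rw [quasiIsoAt_iff_exactAt']
      · rcases n with _ | n
        · exact cx_exactAt_one F G H q h hhq hker1
        · exact cx_exactAt_succ_succ F G H q h hhq n
      · apply ChainComplex.exactAt_succ_single_obj⟩

include hhq hqg hsurj hker0 hker1 in
lemma ext_one_vanish [Projective F] [Projective G] [Projective H]
    (hlift : ∀ φ : G ⟶ ModuleCat.of R R, h ≫ φ = 0 →
      ∃ α : F ⟶ ModuleCat.of R R, q ≫ α = φ) :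
    Subsingleton (((Ext R (ModuleCat.{u} R) 1).obj (Opposite.op W)).obj (ModuleCat.of R R)) := by
  set P := res F G H W q h g hhq hqg hsurj hker0 hker1 with hP
  have hz : Limits.IsZero ((P.complex.linearYonedaObj R (ModuleCat.of R R)).homology 1) := by
    rw [← HomologicalComplex.exactAt_iff_isZero_homology]
    rw [HomologicalComplex.exactAt_iff' _ 0 1 2 (by simp) (by simp)]
    rw [ShortComplex.moduleCat_exact_iff]
    intro φ hφ
    have hφ' : h ≫ φ = 0 := hφ
    obtain ⟨α, hα⟩ := hlift φ hφ'
    exact ⟨α, hα⟩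
  exact subsingleton_of_isZero (hz.of_iso (P.isoExt 1 (ModuleCat.of R R)))

end PushAux

end PushAux

theorem pushforward_of_torsionless
    (R : Type u) [CommRing R] [IsNoetherianRing R] [IsLocalRing R]
    (X : ModuleCat.{u} R) (hX : Module.Finite R X)
    (htl : Function.Injective (Module.Dual.eval R (X : Type u))) :
    ∃ F X₁ : ModuleCat.{u} R, IsFinFree R F ∧ Module.Finite R X₁ ∧
      SES R X F X₁ ∧ ExtVanishes R X₁ (ModuleCat.of R R) 1 := by
  classical
  obtain ⟨m, p0, hp0⟩ := Module.Finite.exists_fin' R X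
  haveI hfinDual : Module.Finite R (Module.Dual R X) := by
    refine Module.Finite.of_injective p0.dualMap ?_
    intro φ ψ hfψ
    ext x
    obtain ⟨y, rfl⟩ := hp0 x
    simpa using LinearMap.congr_fun hfψ y
  obtain ⟨n, π0, hπ0⟩ := Module.Finite.exists_fin' R (Module.Dual R X)
  set f' : X →ₗ[R] (Fin n → R) := LinearMap.pi (fun i => π0 (Pi.single i (1 : R))) with hf'
  have hker : ∀ x : X, f' x = 0 → x = 0 := by
    intro x hx
    have h1 : ∀ c : Fin n → R, π0 c x = 0 := by
      intro c
      have hc : (Module.Dual.eval R X x).comp π0 = 0 := by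
        apply Module.Basis.ext (Pi.basisFun R (Fin n))
        intro i
        have h2 : f' x i = 0 := congrFun hx i
        simp
        exact h2
      simpa using LinearMap.congr_fun hc c
    have h2 : Module.Dual.eval R X x = 0 := by
      ext φ
      obtain ⟨c, rfl⟩ := hπ0 φ
      exact h1 c
    exact htl (by rw [h2, map_zero])
  have hinj : Function.Injective f' := by
    intro x y hxy
    have h0 : f' (x - y) = 0 := by rw [map_sub, hxy, sub_self]
    exact sub_eq_zero.mp (hker _ h0)
  have hres : ∀ ψ : Module.Dual R X, ∃ α : (Fin n → R) →ₗ[R] R,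
      ∀ x : X, α (f' x) = ψ x := by
    intro ψ
    obtain ⟨c, rfl⟩ := hπ0 ψ
    refine ⟨∑ i, c i • (LinearMap.proj i : (Fin n → R) →ₗ[R] R), fun x => ?_⟩
    have hc0 : (c : Fin n → R) = ∑ i, c i • (Pi.single i (1 : R) : Fin n → R) := by
      funext j
      simp [Finset.sum_apply, Pi.single_apply]
    have hc : π0 c x = ∑ i, c i * (π0 (Pi.single i 1)) x := by
      conv_lhs => rw [hc0]
      rw [map_sum]
      simp [smul_eq_mul]
    have hα : (∑ i, c i • (LinearMap.proj i : (Fin n → R) →ₗ[R] R)) (f' x)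
        = ∑ i, c i * f' x i := by
      simp [smul_eq_mul]
    rw [hα, hc]
    rfl
  -- the modules
  let Fm : ModuleCat.{u} R := ModuleCat.of R (Fin n → R)
  let X₁ : ModuleCat.{u} R := ModuleCat.of R ((Fin n → R) ⧸ LinearMap.range f')
  let Gm : ModuleCat.{u} R := ModuleCat.of R (Fin m → R)
  let q' : (Fin m → R) →ₗ[R] (Fin n → R) := f' ∘ₗ p0
  haveI hkerfin : Module.Finite R ↥(LinearMap.ker q') :=
    Module.Finite.iff_fg.mpr (IsNoetherian.noetherian _)
  obtain ⟨k, h0, hh0⟩ := Module.Finite.exists_fin' R ↥(LinearMap.ker q')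
  let Hm : ModuleCat.{u} R := ModuleCat.of R (Fin k → R)
  let h' : (Fin k → R) →ₗ[R] (Fin m → R) := (LinearMap.ker q').subtype ∘ₗ h0
  haveI pF : CategoryTheory.Projective Fm :=
    ModuleCat.projective_of_free (Pi.basisFun R (Fin n))
  haveI pG : CategoryTheory.Projective Gm :=
    ModuleCat.projective_of_free (Pi.basisFun R (Fin m))
  haveI pH : CategoryTheory.Projective Hm :=
    ModuleCat.projective_of_free (Pi.basisFun R (Fin k))
  let qm : Gm ⟶ Fm := ModuleCat.ofHom q'
  let hm : Hm ⟶ Gm := ModuleCat.ofHom h'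
  let gm : Fm ⟶ X₁ := ModuleCat.ofHom (LinearMap.range f').mkQ
  have hhq : hm ≫ qm = 0 := by
    apply ModuleCat.hom_ext
    apply LinearMap.ext
    intro z
    exact LinearMap.mem_ker.mp (h0 z).2
  have hqg : qm ≫ gm = 0 := by
    apply ModuleCat.hom_ext
    apply LinearMap.ext
    intro y
    exact (Submodule.Quotient.mk_eq_zero (LinearMap.range f') (x := q' y)).2 ⟨p0 y, rfl⟩
  have hsurj : Function.Surjective gm := Submodule.mkQ_surjective (LinearMap.range f')
  have hker0 : ∀ x : Fm, gm x = 0 → ∃ y : Gm, qm y = x := by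
    intro x hx
    obtain ⟨x', hx'⟩ := (Submodule.Quotient.mk_eq_zero (LinearMap.range f') (x := x)).1 hx
    obtain ⟨y, rfl⟩ := hp0 x'
    exact ⟨y, hx'⟩
  have hker1 : ∀ y : Gm, qm y = 0 → ∃ z : Hm, hm z = y := by
    intro y hy
    obtain ⟨z, hz⟩ := hh0 ⟨y, LinearMap.mem_ker.mpr hy⟩
    exact ⟨z, congrArg Subtype.val hz⟩
  have hlift : ∀ φ : Gm ⟶ ModuleCat.of R R, hm ≫ φ = 0 →
      ∃ α : Fm ⟶ ModuleCat.of R R, qm ≫ α = φ := by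
    intro φ hφ0
    have hφk : ∀ y : Fin m → R, y ∈ LinearMap.ker p0 → φ y = 0 := by
      intro y hy
      have hyq : y ∈ LinearMap.ker q' := by
        simp only [LinearMap.mem_ker] at hy ⊢
        show f' (p0 y) = 0
        rw [hy, map_zero]
      obtain ⟨z, hz⟩ := hh0 ⟨y, hyq⟩
      have : h' z = y := congrArg Subtype.val hz
      rw [← this]
      exact LinearMap.congr_fun (congrArg ModuleCat.Hom.hom hφ0) z
    let e := p0.quotKerEquivOfSurjective hp0
    have he : ∀ y : Fin m → R, e (Submodule.Quotient.mk y) = p0 y := by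
      intro y
      simp [e, LinearMap.quotKerEquivOfSurjective, LinearMap.quotKerEquivRange_apply_mk]
    let ψ : Module.Dual R X :=
      ((LinearMap.ker p0).liftQ φ.hom
        (fun y hy => hφk y hy)) ∘ₗ (e.symm : X →ₗ[R] ((Fin m → R) ⧸ LinearMap.ker p0))
    have hψ : ∀ y : Fin m → R, ψ (p0 y) = φ y := by
      intro y
      have h1 : e.symm (p0 y) = Submodule.Quotient.mk y :=
        (LinearEquiv.symm_apply_eq e).2 (he y).symm
      have h2 : ψ (p0 y)
          = (LinearMap.ker p0).liftQ φ.hom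
              (fun z hz => hφk z hz) (e.symm (p0 y)) := rfl
      rw [h2, h1]
      exact Submodule.liftQ_apply _ _ _
    obtain ⟨α, hα⟩ := hres ψ
    refine ⟨ModuleCat.ofHom α, ?_⟩
    apply ModuleCat.hom_ext
    apply LinearMap.ext
    intro y
    show α (f' (p0 y)) = φ y
    rw [hα (p0 y)]
    exact hψ y
  refine ⟨Fm, X₁, ⟨(inferInstance : Module.Finite R (Fin n → R)),
      (inferInstance : Module.Free R (Fin n → R))⟩,
      (inferInstance : Module.Finite R ((Fin n → R) ⧸ LinearMap.range f')), ?_, ?_⟩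
  · exact ⟨f', (LinearMap.range f').mkQ, hinj, Submodule.mkQ_surjective _,
      (Submodule.ker_mkQ _).symm⟩
  · exact PushAux.ext_one_vanish Fm Gm Hm X₁ qm hm gm hhq hqg hsurj hker0 hker1 hlift
end
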